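/- Let f : ℝⁿ → ℝ be differentiable and μ-strongly convex with μ > 0, i.e., ⟨∇f(χ₁) − ∇f(χ₂), χ₁ − χ₂⟩ ≥ μ‖χ₁ − χ₂‖² for all χ₁, χ₂ ∈ ℝⁿ, and let x* ∈ ℝⁿ satisfy ∇f(x*) = 0. Let t₀ ∈ ℝ, T_p > 0, r a positive integer, 𝒯(t) = (T_p/(T_p + t₀ − t))^r on [t₀, t₀ + T_p), and k > 0. Suppose x : [t₀, t₀ + T_p) → ℝⁿ is differentiable with ẋ(t) = −k 𝒯(t) ∇f(x(t)). Then for every t ∈ [t₀, t₀ + T_p), ‖x(t) − x*‖² ≤ exp(−2kμ ∫_{t₀}^{t} 𝒯(τ) dτ) · ‖x(t₀) − x*‖². -/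

import Mathlib

open RealInnerProductSpace

/-- The time-scaling function `𝒯(t) = (T_p / (T_p + t₀ - t))^r`. -/
noncomputable def Tscale (t₀ Tp : ℝ) (r : ℕ) (t : ℝ) : ℝ := (Tp / (Tp + t₀ - t)) ^ r

/-- exponential-in-`∫𝒯` distance estimate for the time-varying
feedback gradient flow of a `μ`-strongly convex function:
`‖x(t) - x*‖² ≤ exp(-2kμ∫_{t₀}^{t}𝒯)‖x(t₀) - x*‖²`. -/
theorem strongly_convex_gradient_flow_distance_estimate
    (n : ℕ) (f : EuclideanSpace ℝ (Fin n) → ℝ) (hf : Differentiable ℝ f)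
    (μ : ℝ) (hμ : 0 < μ)
    (hSC : ∀ χ₁ χ₂ : EuclideanSpace ℝ (Fin n),
      μ * ‖χ₁ - χ₂‖ ^ 2 ≤ ⟪gradient f χ₁ - gradient f χ₂, χ₁ - χ₂⟫)
    (xstar : EuclideanSpace ℝ (Fin n)) (hstar : gradient f xstar = 0)
    (t₀ Tp : ℝ) (hTp : 0 < Tp) (r : ℕ) (hr : 0 < r) (k : ℝ) (hk : 0 < k)
    (x : ℝ → EuclideanSpace ℝ (Fin n))
    (hx : ∀ t ∈ Set.Ico t₀ (t₀ + Tp),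
      HasDerivAt x (-(k * Tscale t₀ Tp r t) • gradient f (x t)) t) :
    ∀ t ∈ Set.Ico t₀ (t₀ + Tp),
      ‖x t - xstar‖ ^ 2
        ≤ Real.exp (-2 * k * μ * ∫ τ in t₀..t, Tscale t₀ Tp r τ)
            * ‖x t₀ - xstar‖ ^ 2 := by
  intro t ht
  obtain ⟨hta, htb⟩ := ht
  set T : ℝ → ℝ := Tscale t₀ Tp r with hT
  -- continuity of T on Iio (t₀ + Tp)
  have hTca : ∀ s ∈ Set.Iio (t₀ + Tp), ContinuousAt T s := by
    intro s hs
    have hden : Tp + t₀ - s ≠ 0 := by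
      have : s < t₀ + Tp := hs
      intro h; nlinarith
    exact (continuousAt_const.div (by fun_prop) hden).pow r
  have hTnn : ∀ s ∈ Set.Ico t₀ (t₀ + Tp), 0 ≤ T s := by
    intro s hs
    have h1 : 0 < Tp + t₀ - s := by
      have := hs.2; simp only [Set.mem_Ico] at hs; linarith [hs.2]
    have : 0 ≤ Tp / (Tp + t₀ - s) := div_nonneg hTp.le h1.le
    exact pow_nonneg this r
  set I : ℝ → ℝ := fun s => ∫ τ in t₀..s, T τ with hIdef
  have hIderiv : ∀ s ∈ Set.Ico t₀ (t₀ + Tp), HasDerivAt I (T s) s := by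
    intro s hs
    have hsub : Set.uIcc t₀ s ⊆ Set.Iio (t₀ + Tp) := by
      rw [Set.uIcc_of_le hs.1]
      intro u hu
      exact lt_of_le_of_lt hu.2 hs.2
    have hint : IntervalIntegrable T MeasureTheory.volume t₀ s := by
      apply ContinuousOn.intervalIntegrable
      intro u hu
      exact (hTca u (hsub hu)).continuousWithinAt
    exact intervalIntegral.integral_hasDerivAt_right hint
      (ContinuousAt.stronglyMeasurableAtFilter isOpen_Iio hTca s hs.2)
      (hTca s hs.2)
  set V : ℝ → ℝ := fun s => ⟪x s - xstar, x s - xstar⟫ with hVdef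
  have hVeq : ∀ s, V s = ‖x s - xstar‖ ^ 2 := by
    intro s
    exact real_inner_self_eq_norm_sq _
  set W : ℝ → ℝ := fun s => Real.exp (2 * k * μ * I s) * V s with hWdef
  -- derivative of W and sign
  have hWderiv : ∀ s ∈ Set.Ico t₀ (t₀ + Tp), ∃ d ≤ 0, HasDerivAt W d s := by
    intro s hs
    have hxd := hx s hs
    have hcd : HasDerivAt (fun u => x u - xstar) (-(k * T s) • gradient f (x s)) s :=
      hxd.sub_const xstar
    have hVd : HasDerivAt V
        (⟪x s - xstar, -(k * T s) • gradient f (x s)⟫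
          + ⟪-(k * T s) • gradient f (x s), x s - xstar⟫) s :=
      HasDerivAt.inner ℝ hcd hcd
    have hEd : HasDerivAt (fun u => Real.exp (2 * k * μ * I u))
        (Real.exp (2 * k * μ * I s) * (2 * k * μ * T s)) s := by
      exact ((hIderiv s hs).const_mul (2 * k * μ)).exp
    refine ⟨_, ?_, hEd.mul hVd⟩
    -- show the derivative is ≤ 0
    have hkey : μ * ‖x s - xstar‖ ^ 2 ≤ ⟪gradient f (x s), x s - xstar⟫ := by
      have := hSC (x s) xstar
      rwa [hstar, sub_zero] at this
    have hinner : ⟪x s - xstar, -(k * T s) • gradient f (x s)⟫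
          + ⟪-(k * T s) • gradient f (x s), x s - xstar⟫
        = -(2 * (k * T s)) * ⟪gradient f (x s), x s - xstar⟫ := by
      rw [real_inner_smul_right, real_inner_smul_left, real_inner_comm (x s - xstar)]
      ring
    have hkT : 0 ≤ k * T s := mul_nonneg hk.le (hTnn s hs)
    have hVnn : 0 ≤ V s := by rw [hVeq]; positivity
    have hE : 0 < Real.exp (2 * k * μ * I s) := Real.exp_pos _
    rw [hinner]
    have h1 : -(2 * (k * T s)) * ⟪gradient f (x s), x s - xstar⟫
        ≤ -(2 * (k * T s)) * (μ * ‖x s - xstar‖ ^ 2) := by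
      apply mul_le_mul_of_nonpos_left hkey
      nlinarith
    calc Real.exp (2 * k * μ * I s) * (2 * k * μ * T s) * V s
          + Real.exp (2 * k * μ * I s) * (-(2 * (k * T s)) * ⟪gradient f (x s), x s - xstar⟫)
        ≤ Real.exp (2 * k * μ * I s) * (2 * k * μ * T s) * V s
          + Real.exp (2 * k * μ * I s) * (-(2 * (k * T s)) * (μ * ‖x s - xstar‖ ^ 2)) := by
          have := mul_le_mul_of_nonneg_left h1 hE.le
          linarith
      _ = 0 := by rw [hVeq]; ring
  -- W is antitone on [t₀, t]
  have hIcc : Set.Icc t₀ t ⊆ Set.Ico t₀ (t₀ + Tp) := by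
    intro u hu; exact ⟨hu.1, lt_of_le_of_lt hu.2 htb⟩
  have hWanti : W t ≤ W t₀ := by
    rcases eq_or_lt_of_le hta with h | h
    · rw [h]
    have hanti : AntitoneOn W (Set.Icc t₀ t) := by
      apply antitoneOn_of_deriv_nonpos (convex_Icc t₀ t)
      · intro u hu
        exact (hWderiv u (hIcc hu)).choose_spec.2.continuousAt.continuousWithinAt
      · intro u hu
        rw [interior_Icc] at hu
        exact DifferentiableAt.differentiableWithinAt
          (hWderiv u (hIcc ⟨hu.1.le, hu.2.le⟩)).choose_spec.2.differentiableAt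
      · intro u hu
        rw [interior_Icc] at hu
        obtain ⟨d, hd, hder⟩ := hWderiv u (hIcc ⟨hu.1.le, hu.2.le⟩)
        rw [hder.deriv]; exact hd
    exact hanti (Set.left_mem_Icc.mpr hta) (Set.right_mem_Icc.mpr hta) hta
  -- conclude
  have hI0 : I t₀ = 0 := by simp [hIdef]
  have hWt₀ : W t₀ = V t₀ := by simp [hWdef, hI0]
  have hE : 0 < Real.exp (2 * k * μ * I t) := Real.exp_pos _
  have : Real.exp (2 * k * μ * I t) * V t ≤ V t₀ := by
    rw [← hWt₀]; exact hWanti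
  have hfin : V t ≤ Real.exp (-(2 * k * μ * I t)) * V t₀ := by
    rw [Real.exp_neg, inv_mul_eq_div, le_div_iff₀ hE, mul_comm]
    exact this
  rw [← hVeq, ← hVeq]
  convert hfin using 2
  simp only [hIdef]
  ring
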